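/- For two walks w, w' of B_{n,k} in the same conjugacy class, the height-to-min distributions satisfy ĥ_i(w) ≤ ĥ_{i+k}(w') for all i ≥ 0, where ĥ_i(w) is the number of down steps of w ending at height at most i above the minimum of w. -/

import Mathlib

/-- Partial sum of the first `p` increments of a walk `w`. -/
def psum {m : ℕ} (w : Fin m → ℤ) (p : ℕ) : ℤ :=
  ∑ i ∈ Finset.univ.filter (fun i : Fin m => i.val < p), w i

/-- Cyclic shift of a walk by `s` positions. -/
def cyclicShift {m : ℕ} (s : ℕ) (w : Fin m → ℤ) : Fin m → ℤ :=
  fun i => w ⟨(i.val + s) % m, Nat.mod_lt _ i.pos⟩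

/-- `w` belongs to `B_{n,k}`. -/
def IsBWalk (n k : ℕ) (w : Fin (2 * n + k) → ℤ) : Prop :=
  (∀ i, w i = 1 ∨ w i = -1) ∧
  (Finset.univ.filter (fun i => w i = 1)).card = n ∧
  ∀ i : Fin (2 * n + k), i.val = 2 * n + k - 1 → w i = -1

/-- Minimum value of the walk `w` over all steps `0 ≤ p ≤ 2n+k`. -/
def minVal (n k : ℕ) (w : Fin (2 * n + k) → ℤ) : ℤ :=
  (Finset.range (2 * n + k + 1)).inf' (by simp) (psum w)

/-- `ĥᵢ(w)`: number of down steps of `w` ending at height at most `i` above the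
minimum of `w` (height-to-min distribution). -/
def heightToMinCount (n k : ℕ) (w : Fin (2 * n + k) → ℤ) (i : ℤ) : ℕ :=
  (Finset.univ.filter
    (fun t : Fin (2 * n + k) => w t = -1 ∧ psum w (t.val + 1) - minVal n k w ≤ i)).card

lemma psum_zero {m : ℕ} (w : Fin m → ℤ) : psum w 0 = 0 := by
  unfold psum; simp

lemma psum_succ {m : ℕ} (w : Fin m → ℤ) (p : ℕ) (hp : p < m) :
    psum w (p + 1) = psum w p + w ⟨p, hp⟩ := by
  unfold psum
  have h : Finset.univ.filter (fun i : Fin m => i.val < p + 1)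
      = insert ⟨p, hp⟩ (Finset.univ.filter (fun i : Fin m => i.val < p)) := by
    ext j
    simp [Fin.ext_iff]
    omega
  rw [h, Finset.sum_insert (by simp), add_comm]

lemma psum_cyclicShift {m : ℕ} (w : Fin m → ℤ) (s : ℕ) (hs : s < m) :
    ∀ p, p ≤ m →
      psum (cyclicShift s w) p =
        (if s + p ≤ m then psum w (s + p) else psum w (s + p - m) + psum w m) - psum w s := by
  intro p
  induction p with
  | zero =>
    intro _
    rw [if_pos (by omega)]
    simp [psum_zero]
  | succ p ih =>
    intro hp
    have hpm : p < m := by omega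
    rw [psum_succ (cyclicShift s w) p hpm, ih (by omega), ← Nat.add_assoc]
    by_cases h1 : s + p + 1 ≤ m
    · rw [if_pos (by omega), if_pos h1]
      have hps : (p + s) % m = p + s := Nat.mod_eq_of_lt (by omega)
      have hstep := psum_succ w (s + p) (by omega)
      have hcs : cyclicShift s w ⟨p, hpm⟩ = w ⟨s + p, by omega⟩ := by
        show w _ = w _
        congr 1
        exact Fin.ext (by simp only []; rw [hps]; omega)
      rw [hstep, hcs]; ring
    · by_cases h2 : s + p ≤ m
      · have hsp : p + s = m := by omega
        rw [if_pos h2, if_neg h1]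
        have h0 : cyclicShift s w ⟨p, hpm⟩ = w ⟨0, by omega⟩ := by
          show w _ = w _
          congr 1
          exact Fin.ext (by show (p+s) % m = 0; rw [hsp, Nat.mod_self])
        have ha : psum w (s + p) = psum w m := congrArg (psum w) (by omega)
        have hb : psum w (s + p + 1 - m) = psum w 1 := congrArg (psum w) (by omega)
        have hc : psum w 1 = psum w 0 + w ⟨0, by omega⟩ := psum_succ w 0 (by omega)
        rw [h0, ha, hb, hc, psum_zero]; ring
      · rw [if_neg h2, if_neg h1]
        have hlt : p + s - m < m := by omega
        have hmod : (p + s) % m = p + s - m := by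
          rw [Nat.mod_eq_sub_mod (by omega), Nat.mod_eq_of_lt hlt]
        have h0 : cyclicShift s w ⟨p, hpm⟩ = w ⟨s + p - m, by omega⟩ := by
          show w _ = w _
          congr 1
          exact Fin.ext (by show (p+s) % m = s + p - m; rw [hmod]; omega)
        have hstep := psum_succ w (s + p - m) (by omega)
        rw [show s + p + 1 - m = (s + p - m) + 1 from by omega, hstep, h0]; ring

lemma psum_total (n k : ℕ) (w : Fin (2 * n + k) → ℤ) (hw : IsBWalk n k w) :
    psum w (2 * n + k) = -(k : ℤ) := by
  have h1 : psum w (2 * n + k) = ∑ i, w i := by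
    unfold psum
    congr 1
    exact Finset.filter_true_of_mem (fun i _ => i.isLt)
  rw [h1, ← Finset.sum_filter_add_sum_filter_not Finset.univ (fun i => w i = 1)]
  have hcard := Finset.card_filter_add_card_filter_not
    (s := (Finset.univ : Finset (Fin (2 * n + k)))) (p := fun i => w i = 1)
  rw [hw.2.1, Finset.card_univ, Fintype.card_fin] at hcard
  have hc : (Finset.univ.filter (fun i : Fin (2 * n + k) => ¬ w i = 1)).card = n + k := by
    omega
  have e1 : ∑ i ∈ Finset.univ.filter (fun i : Fin (2 * n + k) => w i = 1), w i = (n : ℤ) := by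
    rw [Finset.sum_congr rfl (fun i hi => (Finset.mem_filter.mp hi).2), Finset.sum_const,
      hw.2.1]
    simp
  have e2 : ∑ i ∈ Finset.univ.filter (fun i : Fin (2 * n + k) => ¬ w i = 1), w i
      = -((n : ℤ) + k) := by
    have hall : ∀ i ∈ Finset.univ.filter (fun i : Fin (2 * n + k) => ¬ w i = 1), w i = -1 := by
      intro i hi
      rcases hw.1 i with h | h
      · exact absurd h (Finset.mem_filter.mp hi).2
      · exact h
    rw [Finset.sum_congr rfl hall, Finset.sum_const, hc]
    simp
  rw [e1, e2]
  ring

lemma minVal_le (n k : ℕ) (w : Fin (2 * n + k) → ℤ) (q : ℕ) (hq : q ≤ 2 * n + k) :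
    minVal n k w ≤ psum w q :=
  Finset.inf'_le _ (Finset.mem_range.mpr (by omega))

lemma minVal_shift (n k : ℕ) (w : Fin (2 * n + k) → ℤ) (hw : IsBWalk n k w)
    (s : ℕ) (hs : s < 2 * n + k) :
    minVal n k w + psum w (2 * n + k) - psum w s ≤ minVal n k (cyclicShift s w) := by
  apply Finset.le_inf'
  intro p hp
  rw [Finset.mem_range] at hp
  rw [psum_cyclicShift w s hs p (by omega)]
  have htot : psum w (2 * n + k) = -(k : ℤ) := psum_total n k w hw
  split
  · have h1 := minVal_le n k w (s + p) (by omega)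
    have h2 : psum w (2 * n + k) ≤ 0 := by rw [htot]; simp
    linarith
  · have h1 := minVal_le n k w (s + p - (2 * n + k)) (by omega)
    linarith

/-- For two walks of `B_{n,k}` in the same conjugacy class, the height-to-min
distributions satisfy `ĥᵢ(w) ≤ ĥ_{i+k}(w')` for all `i ≥ 0`. -/
theorem heightToMinCount_le_cyclicShift (n k : ℕ) (hk : 1 ≤ k) (s : ℕ)
    (w : Fin (2 * n + k) → ℤ) (hw : IsBWalk n k w) :
    ∀ i : ℤ, 0 ≤ i →
      heightToMinCount n k w i ≤ heightToMinCount n k (cyclicShift s w) (i + k) := by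
  intro i hi
  have hm : 0 < 2 * n + k := by omega
  have hs' : s % (2 * n + k) < 2 * n + k := Nat.mod_lt _ hm
  have hshift : cyclicShift s w = cyclicShift (s % (2 * n + k)) w := by
    funext j
    show w _ = w _
    congr 1
    apply Fin.ext
    show (j.val + s) % (2 * n + k) = (j.val + s % (2 * n + k)) % (2 * n + k)
    conv_lhs => rw [Nat.add_mod]
    conv_rhs => rw [Nat.add_mod, Nat.mod_mod_of_dvd s (dvd_refl _)]
  rw [hshift]
  have htot : psum w (2 * n + k) = -(k : ℤ) := psum_total n k w hw
  have hkey : ∀ t : Fin (2 * n + k),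
      ((t.val + (2 * n + k - s % (2 * n + k))) % (2 * n + k) + s % (2 * n + k)) % (2 * n + k)
        = t.val := by
    intro t
    rw [Nat.mod_add_mod,
      show t.val + (2 * n + k - s % (2 * n + k)) + s % (2 * n + k) = t.val + (2 * n + k)
        from by omega,
      Nat.add_mod_right]
    exact Nat.mod_eq_of_lt t.isLt
  unfold heightToMinCount
  apply Finset.card_le_card_of_injOn
    (fun t : Fin (2 * n + k) =>
      (⟨(t.val + (2 * n + k - s % (2 * n + k))) % (2 * n + k), Nat.mod_lt _ hm⟩
        : Fin (2 * n + k)))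
  · intro t ht
    rw [Finset.mem_coe, Finset.mem_filter] at ht
    rw [Finset.mem_coe, Finset.mem_filter]
    obtain ⟨-, ht1, ht2⟩ := ht
    refine ⟨Finset.mem_univ _, ?_, ?_⟩
    · show w _ = -1
      have heq : (⟨((t.val + (2 * n + k - s % (2 * n + k))) % (2 * n + k) + s % (2 * n + k))
            % (2 * n + k), Nat.mod_lt _ hm⟩ : Fin (2 * n + k)) = t :=
        Fin.ext (hkey t)
      rw [heq]
      exact ht1
    · have haval : (t.val + (2 * n + k - s % (2 * n + k))) % (2 * n + k) < 2 * n + k :=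
        Nat.mod_lt _ hm
      have hka := hkey t
      have hub : psum (cyclicShift (s % (2 * n + k)) w)
          ((t.val + (2 * n + k - s % (2 * n + k))) % (2 * n + k) + 1)
          ≤ psum w (t.val + 1) - psum w (s % (2 * n + k)) := by
        rw [psum_cyclicShift w (s % (2 * n + k)) hs' _ (by omega)]
        split
        · rename_i hcond
          have hlt1 : (t.val + (2 * n + k - s % (2 * n + k))) % (2 * n + k) + s % (2 * n + k)
              < 2 * n + k := by omega
          have hts : (t.val + (2 * n + k - s % (2 * n + k))) % (2 * n + k) + s % (2 * n + k)
              = t.val := (Nat.mod_eq_of_lt hlt1).symm.trans hka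
          have heqp : psum w (s % (2 * n + k)
                + ((t.val + (2 * n + k - s % (2 * n + k))) % (2 * n + k) + 1))
              = psum w (t.val + 1) :=
            congrArg (psum w) (by omega)
          rw [heqp]
        · rename_i hcond
          have hge : 2 * n + k
              ≤ (t.val + (2 * n + k - s % (2 * n + k))) % (2 * n + k) + s % (2 * n + k) := by
            omega
          have hlt2 : (t.val + (2 * n + k - s % (2 * n + k))) % (2 * n + k) + s % (2 * n + k)
              - (2 * n + k) < 2 * n + k := by omega
          have hts : (t.val + (2 * n + k - s % (2 * n + k))) % (2 * n + k) + s % (2 * n + k)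
              - (2 * n + k) = t.val :=
            ((Nat.mod_eq_of_lt hlt2).symm.trans (Nat.mod_eq_sub_mod hge).symm).trans hka
          have heqp : psum w (s % (2 * n + k)
                + ((t.val + (2 * n + k - s % (2 * n + k))) % (2 * n + k) + 1) - (2 * n + k))
              = psum w (t.val + 1) :=
            congrArg (psum w) (by omega)
          rw [heqp]
          have hneg : psum w (2 * n + k) ≤ 0 := by rw [htot]; simp
          linarith
      have hlb := minVal_shift n k w hw (s % (2 * n + k)) hs'
      have hmin := minVal_le n k w (t.val + 1) (by omega)
      simp only []
      linarith
  · intro a _ b _ hab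
    apply Fin.ext
    have hval : (a.val + (2 * n + k - s % (2 * n + k))) % (2 * n + k)
        = (b.val + (2 * n + k - s % (2 * n + k))) % (2 * n + k) := congrArg Fin.val hab
    rw [← hkey a, ← hkey b, hval]
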